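/- For all natural numbers m and n and every monotone function f : Fin m → Fin n, setting k = m + n − (cardinality of the image of f), there exist a unique monotone injective function g : Fin m → Fin k and a unique monotone surjective function h : Fin k → Fin n such that f = h ∘ g. -/

import Mathlib

open Finset

namespace ISD

lemma card_val_lt (k c : ℕ) (hc : c ≤ k) :
    (Finset.univ.filter fun y : Fin k => (y:ℕ) < c).card = c := by
  have : (Finset.univ.filter fun y : Fin k => (y:ℕ) < c).card = (Finset.range c).card := by
    refine Finset.card_bij (fun y _ => (y : ℕ)) ?_ ?_ ?_
    · intro a ha; simp at ha ⊢; omega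
    · intro a ha b hb hab; exact Fin.val_injective hab
    · intro b hb; simp at hb; exact ⟨⟨b, lt_of_lt_of_le hb hc⟩, by simp [hb], rfl⟩
  simpa using this

variable {m n : ℕ} (f : Fin m → Fin n)

def A (v : ℕ) : ℕ := (Finset.univ.filter fun j : Fin m => (f j : ℕ) < v).card

def D (v : ℕ) : ℕ :=
  (Finset.univ.filter fun w : Fin n => (w:ℕ) < v ∧ w ∉ Finset.univ.image f).card

def u (v : ℕ) : ℕ := A f v + D f v

lemma A_mono : Monotone (A f) := fun a b hab =>
  Finset.card_le_card (by intro j hj; rw [Finset.mem_filter] at hj ⊢; exact ⟨hj.1, by omega⟩)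

lemma D_mono : Monotone (D f) := fun a b hab =>
  Finset.card_le_card (by
    intro w hw; rw [Finset.mem_filter] at hw ⊢; exact ⟨hw.1, by omega, hw.2.2⟩)

lemma u_mono : Monotone (u f) := fun a b hab => Nat.add_le_add (A_mono f hab) (D_mono f hab)

lemma A_le (v : ℕ) : A f v ≤ m := by
  simpa [A] using Finset.card_le_card (Finset.filter_subset _ (Finset.univ : Finset (Fin m)))

lemma A_n : A f n = m := by
  have : (Finset.univ.filter fun j : Fin m => (f j : ℕ) < n) = Finset.univ := by
    ext j; simp [(f j).isLt]
  simp [A, this]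

lemma r_le_n : (Finset.univ.image f).card ≤ n := by
  simpa using Finset.card_le_card (Finset.subset_univ (Finset.univ.image f))

lemma D_n : D f n = n - (Finset.univ.image f).card := by
  have h1 : (Finset.univ.filter fun w : Fin n => (w:ℕ) < n ∧ w ∉ Finset.univ.image f)
      = (Finset.univ.image f)ᶜ := by
    ext w; simp [w.isLt]
  rw [D, h1, Finset.card_compl, Fintype.card_fin]

lemma D_le (v : ℕ) : D f v ≤ n - (Finset.univ.image f).card := by
  rw [← D_n]
  unfold D
  apply Finset.card_le_card
  intro w hw; rw [Finset.mem_filter] at hw ⊢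
  exact ⟨hw.1, w.isLt, hw.2.2⟩

lemma u_n : u f n = m + n - (Finset.univ.image f).card := by
  have := r_le_n f
  rw [u, A_n, D_n]; omega

lemma u_zero : u f 0 = 0 := by simp [u, A, D]

lemma u_step (v : ℕ) (hv : v < n) : u f v + 1 ≤ u f (v + 1) := by
  by_cases hS : (⟨v, hv⟩ : Fin n) ∈ Finset.univ.image f
  · obtain ⟨j, -, hj⟩ := Finset.mem_image.mp hS
    have hA : A f v < A f (v + 1) := by
      apply Finset.card_lt_card
      constructor
      · intro x hx; rw [Finset.mem_filter] at hx ⊢; exact ⟨hx.1, by omega⟩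
      · intro hsub
        have hjmem : j ∈ Finset.univ.filter fun x : Fin m => (f x : ℕ) < v + 1 := by
          rw [Finset.mem_filter, hj]; exact ⟨Finset.mem_univ _, by simp⟩
        have := (Finset.mem_filter.mp (hsub hjmem)).2
        rw [hj] at this
        simp at this
    have hD : D f v ≤ D f (v + 1) := D_mono f (by omega)
    unfold u; omega
  · have hD : D f v < D f (v + 1) := by
      apply Finset.card_lt_card
      constructor
      · intro x hx; rw [Finset.mem_filter] at hx ⊢; exact ⟨hx.1, by omega, hx.2.2⟩
      · intro hsub
        have hmem : (⟨v, hv⟩ : Fin n) ∈ Finset.univ.filter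
            fun w : Fin n => (w:ℕ) < v + 1 ∧ w ∉ Finset.univ.image f := by
          rw [Finset.mem_filter]; exact ⟨Finset.mem_univ _, by simp, hS⟩
        have := (Finset.mem_filter.mp (hsub hmem)).2.1
        simp at this
    have hA : A f v ≤ A f (v + 1) := A_mono f (by omega)
    unfold u; omega

lemma u_strict {a b : ℕ} (hab : a < b) (hb : b ≤ n) : u f a < u f b := by
  have h1 := u_step f a (by omega)
  have h2 := u_mono f (show a + 1 ≤ b by omega)
  omega

lemma A_le_self (hf : Monotone f) (i : Fin m) : A f (f i) ≤ i := by
  have hsub : (Finset.univ.filter fun j : Fin m => (f j : ℕ) < f i)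
      ⊆ (Finset.univ.filter fun j : Fin m => (j : ℕ) < i) := by
    intro j hj; rw [Finset.mem_filter] at hj ⊢
    refine ⟨hj.1, ?_⟩
    by_contra hcon
    have : f i ≤ f j := hf (by omega : i ≤ j)
    have := hj.2
    omega
  calc A f (f i) ≤ _ := Finset.card_le_card hsub
    _ = (i : ℕ) := card_val_lt m i (le_of_lt i.isLt)

lemma A_ge (hf : Monotone f) (i : Fin m) : (i : ℕ) + 1 ≤ A f ((f i : ℕ) + 1) := by
  have hsub : (Finset.univ.filter fun j : Fin m => (j : ℕ) < (i : ℕ) + 1)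
      ⊆ (Finset.univ.filter fun j : Fin m => (f j : ℕ) < (f i : ℕ) + 1) := by
    intro j hj; rw [Finset.mem_filter] at hj ⊢
    refine ⟨hj.1, ?_⟩
    have : f j ≤ f i := hf (by have := hj.2; omega : j ≤ i)
    omega
  calc (i:ℕ) + 1 = _ := (card_val_lt m ((i:ℕ)+1) i.isLt).symm
    _ ≤ _ := Finset.card_le_card hsub

lemma fiber_bound {k : ℕ} (g : Fin m → Fin k) (h : Fin k → Fin n)
    (hg : Function.Injective g) (hhs : Function.Surjective h)
    (hcomp : ∀ i, h (g i) = f i) (P : Fin n → Prop) [DecidablePred P] :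
    (Finset.univ.filter fun j : Fin m => P (f j)).card
      + (Finset.univ.filter fun w : Fin n => P w ∧ w ∉ Finset.univ.image f).card
      ≤ (Finset.univ.filter fun x : Fin k => P (h x)).card := by
  classical
  set T1 := (Finset.univ.filter fun j : Fin m => P (f j)).image g with hT1
  set T2 := (Finset.univ.filter fun w : Fin n => P w ∧ w ∉ Finset.univ.image f).image
    (Function.surjInv hhs) with hT2
  have hc1 : T1.card = (Finset.univ.filter fun j : Fin m => P (f j)).card :=
    Finset.card_image_of_injective _ hg
  have hc2 : T2.card = (Finset.univ.filter fun w : Fin n => P w ∧ w ∉ Finset.univ.image f).card :=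
    Finset.card_image_of_injective _ (Function.injective_surjInv hhs)
  have hdisj : Disjoint T1 T2 := by
    rw [Finset.disjoint_left]
    intro x hx1 hx2
    obtain ⟨j, hj, rfl⟩ := Finset.mem_image.mp hx1
    obtain ⟨w, hw, hwx⟩ := Finset.mem_image.mp hx2
    simp only [Finset.mem_filter] at hw
    have heq : h (Function.surjInv hhs w) = w := Function.surjInv_eq hhs w
    rw [hwx] at heq
    rw [hcomp j] at heq
    exact hw.2.2 (heq ▸ Finset.mem_image_of_mem f (Finset.mem_univ j))
  have hsub : T1 ∪ T2 ⊆ Finset.univ.filter fun x : Fin k => P (h x) := by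
    intro x hx
    rcases Finset.mem_union.mp hx with hx | hx
    · obtain ⟨j, hj, rfl⟩ := Finset.mem_image.mp hx
      rw [Finset.mem_filter] at hj ⊢
      exact ⟨Finset.mem_univ _, by rw [hcomp]; exact hj.2⟩
    · obtain ⟨w, hw, rfl⟩ := Finset.mem_image.mp hx
      rw [Finset.mem_filter] at hw ⊢
      exact ⟨Finset.mem_univ _, by rw [Function.surjInv_eq hhs]; exact hw.2.1⟩
  calc _ = T1.card + T2.card := by rw [hc1, hc2]
    _ = (T1 ∪ T2).card := (Finset.card_union_of_disjoint hdisj).symm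
    _ ≤ _ := Finset.card_le_card hsub


lemma n_pos_of_k_pos (hk : 0 < m + n - (Finset.univ.image f).card) : 0 < n := by
  rcases Nat.eq_zero_or_pos n with hn | hn
  · subst hn
    rcases Nat.eq_zero_or_pos m with hm | hm
    · subst hm
      simp at hk
    · exact (f ⟨0, hm⟩).elim0
  · exact hn

def gmap (i : Fin m) : Fin (m + n - (Finset.univ.image f).card) :=
  ⟨(i : ℕ) + D f (f i), by
    have h1 := D_le f (f i)
    have h2 := r_le_n f
    have h3 := i.isLt
    omega⟩

def hmap (x : Fin (m + n - (Finset.univ.image f).card)) : Fin n :=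
  ⟨(Finset.univ.filter fun v : Fin n => u f ((v:ℕ)+1) ≤ (x:ℕ)).card, by
    have hn : 0 < n := n_pos_of_k_pos f (lt_of_le_of_lt (Nat.zero_le _) x.isLt)
    have hlast : (⟨n-1, by omega⟩ : Fin n) ∉
        (Finset.univ.filter fun v : Fin n => u f ((v:ℕ)+1) ≤ (x:ℕ)) := by
      rw [Finset.mem_filter]
      rintro ⟨-, hle⟩
      have : (n - 1 : ℕ) + 1 = n := by omega
      rw [this, u_n] at hle
      have := x.isLt
      omega
    have hss : (Finset.univ.filter fun v : Fin n => u f ((v:ℕ)+1) ≤ (x:ℕ))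
        ⊂ Finset.univ := Finset.ssubset_univ_iff.mpr (by
      intro hcon; rw [hcon] at hlast; exact hlast (Finset.mem_univ _))
    have := Finset.card_lt_card hss
    simpa using this⟩

lemma hmap_card_spec (v : ℕ) (hv : v < n) (x : ℕ) (h1 : u f v ≤ x) (h2 : x < u f (v+1)) :
    (Finset.univ.filter fun w : Fin n => u f ((w:ℕ)+1) ≤ x).card = v := by
  have heq : (Finset.univ.filter fun w : Fin n => u f ((w:ℕ)+1) ≤ x)
      = (Finset.univ.filter fun w : Fin n => (w:ℕ) < v) := by
    ext w
    rw [Finset.mem_filter, Finset.mem_filter]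
    constructor
    · rintro ⟨-, hle⟩
      refine ⟨Finset.mem_univ _, ?_⟩
      by_contra hcon
      have : u f (v+1) ≤ u f ((w:ℕ)+1) := u_mono f (by omega)
      omega
    · rintro ⟨-, hlt⟩
      refine ⟨Finset.mem_univ _, ?_⟩
      have : u f ((w:ℕ)+1) ≤ u f v := u_mono f (by omega)
      omega
  rw [heq, card_val_lt n v (by omega)]

lemma hmap_gmap (hf : Monotone f) (i : Fin m) : hmap f (gmap f i) = f i := by
  apply Fin.ext
  show (Finset.univ.filter fun w : Fin n => u f ((w:ℕ)+1) ≤ ((i:ℕ) + D f (f i))).card = (f i : ℕ)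
  apply hmap_card_spec f (f i : ℕ) (f i).isLt
  · have := A_le_self f hf i
    unfold u; omega
  · have h1 := A_ge f hf i
    have h2 : D f (f i) ≤ D f ((f i : ℕ) + 1) := D_mono f (by omega)
    unfold u; omega

lemma hmap_mono : Monotone (hmap f) := by
  intro x y hxy
  apply Fin.mk_le_mk.mpr
  apply Finset.card_le_card
  intro w hw
  rw [Finset.mem_filter] at hw ⊢
  exact ⟨hw.1, le_trans hw.2 hxy⟩

lemma gmap_strictmono (hf : Monotone f) : StrictMono (gmap f) := by
  intro i j hij
  apply Fin.mk_lt_mk.mpr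
  have h1 : D f (f i) ≤ D f (f j) := D_mono f (by
    have := hf (le_of_lt hij)
    exact_mod_cast this)
  have : (i : ℕ) < j := hij
  omega

lemma hmap_surj : Function.Surjective (hmap f) := by
  intro v
  have hv := v.isLt
  have hx : u f (v : ℕ) < m + n - (Finset.univ.image f).card := by
    rw [← u_n]; exact u_strict f hv (le_refl n)
  refine ⟨⟨u f (v:ℕ), hx⟩, ?_⟩
  apply Fin.ext
  show (Finset.univ.filter fun w : Fin n => u f ((w:ℕ)+1) ≤ u f (v:ℕ)).card = (v : ℕ)
  exact hmap_card_spec f (v:ℕ) hv _ (le_refl _) (u_strict f (by omega) hv)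


section Uniq
variable {k : ℕ} (g : Fin m → Fin k) (h : Fin k → Fin n)
  (hk : k = m + n - (Finset.univ.image f).card)
  (hg : Function.Injective g) (hhs : Function.Surjective h)
  (hcomp : ∀ i, h (g i) = f i)

include hk hg hhs hcomp in
lemma N_eq (v : ℕ) (hv : v ≤ n) :
    (Finset.univ.filter fun x : Fin k => (h x : ℕ) < v).card = u f v := by
  classical
  have h1 := fiber_bound f g h hg hhs hcomp (fun w => (w:ℕ) < v)
  have h2 := fiber_bound f g h hg hhs hcomp (fun w => ¬ ((w:ℕ) < v))
  have a1 : (Finset.univ.filter fun j : Fin m => (f j : ℕ) < v).card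
      + (Finset.univ.filter fun j : Fin m => ¬ ((f j : ℕ) < v)).card = m := by
    rw [Finset.card_filter_add_card_filter_not]
    simp
  have a2 : (Finset.univ.filter fun w : Fin n => ((w:ℕ) < v) ∧ w ∉ Finset.univ.image f).card
      + (Finset.univ.filter fun w : Fin n => ¬((w:ℕ) < v) ∧ w ∉ Finset.univ.image f).card
      = n - (Finset.univ.image f).card := by
    rw [← Finset.card_union_of_disjoint]
    · have : ((Finset.univ.filter fun w : Fin n => ((w:ℕ) < v) ∧ w ∉ Finset.univ.image f)
          ∪ (Finset.univ.filter fun w : Fin n => ¬((w:ℕ) < v) ∧ w ∉ Finset.univ.image f))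
          = (Finset.univ.image f)ᶜ := by
        ext w
        simp only [Finset.mem_union, Finset.mem_filter, Finset.mem_compl, Finset.mem_univ,
          true_and]
        tauto
      rw [this, Finset.card_compl, Fintype.card_fin]
    · rw [Finset.disjoint_left]
      intro w hw1 hw2
      rw [Finset.mem_filter] at hw1 hw2
      exact hw2.2.1 hw1.2.1
  have a3 : (Finset.univ.filter fun x : Fin k => (h x : ℕ) < v).card
      + (Finset.univ.filter fun x : Fin k => ¬ ((h x : ℕ) < v)).card = k := by
    rw [Finset.card_filter_add_card_filter_not]
    simp
  have hA := A_le f v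
  have hD := D_le f v
  have hr := r_le_n f
  show _ = A f v + D f v
  unfold A D at *
  omega

include hk hg hhs hcomp in
lemma h_lt_iff (hh : Monotone h) (x : Fin k) (v : ℕ) (hv : v ≤ n) :
    (h x : ℕ) < v ↔ (x : ℕ) < u f v := by
  have hN := N_eq f g h hk hg hhs hcomp v hv
  constructor
  · intro hlt
    have hsub : (Finset.univ.filter fun y : Fin k => (y:ℕ) < (x:ℕ) + 1)
        ⊆ (Finset.univ.filter fun y : Fin k => (h y : ℕ) < v) := by
      intro y hy
      rw [Finset.mem_filter] at hy ⊢
      refine ⟨hy.1, ?_⟩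
      have : h y ≤ h x := hh (by
        have := hy.2
        exact Fin.le_def.mpr (by omega))
      omega
    have := Finset.card_le_card hsub
    rw [card_val_lt k ((x:ℕ)+1) x.isLt, hN] at this
    omega
  · intro hlt
    by_contra hcon
    have hsub : (Finset.univ.filter fun y : Fin k => (h y : ℕ) < v)
        ⊆ (Finset.univ.filter fun y : Fin k => (y:ℕ) < (x:ℕ)) := by
      intro y hy
      rw [Finset.mem_filter] at hy ⊢
      refine ⟨hy.1, ?_⟩
      by_contra hcon2
      have : h x ≤ h y := hh (Fin.le_def.mpr (by omega))
      omega
    have := Finset.card_le_card hsub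
    rw [card_val_lt k (x:ℕ) (le_of_lt x.isLt), hN] at this
    omega

include hk hg hhs hcomp in
lemma h_determined (hh : Monotone h) (x : Fin k) :
    (h x : ℕ) = (Finset.univ.filter fun w : Fin n => u f ((w:ℕ)+1) ≤ (x:ℕ)).card := by
  have key : ∀ w : Fin n, (u f ((w:ℕ)+1) ≤ (x:ℕ)) ↔ (w:ℕ) < (h x : ℕ) := by
    intro w
    have hiff := h_lt_iff f g h hk hg hhs hcomp hh x ((w:ℕ)+1) w.isLt
    constructor
    · intro hle
      by_contra hcon
      have h2 : (h x : ℕ) < (w:ℕ) + 1 := by omega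
      have := hiff.mp h2
      omega
    · intro hlt
      by_contra hcon
      have h2 : (x:ℕ) < u f ((w:ℕ)+1) := by omega
      have := hiff.mpr h2
      omega
  have heq : (Finset.univ.filter fun w : Fin n => u f ((w:ℕ)+1) ≤ (x:ℕ))
      = (Finset.univ.filter fun w : Fin n => (w:ℕ) < (h x : ℕ)) := by
    ext w
    rw [Finset.mem_filter, Finset.mem_filter, key w]
  rw [heq, card_val_lt n (h x : ℕ) (le_of_lt (h x).isLt)]

include hk hg hhs hcomp in
lemma g_determined (hf : Monotone f) (hgm : Monotone g) (hh : Monotone h) (i : Fin m) :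
    (g i : ℕ) = (i : ℕ) + D f (f i) := by
  classical
  have hgs : StrictMono g := hgm.strictMono_of_injective hg
  have hvn : (f i : ℕ) < n := (f i).isLt
  have Nv := N_eq f g h hk hg hhs hcomp (f i : ℕ) (by omega)
  have Nv1 := N_eq f g h hk hg hhs hcomp ((f i : ℕ) + 1) (by omega)
  -- split1
  have hdisj1 : Disjoint (Finset.univ.filter fun x : Fin k => (h x : ℕ) < (f i : ℕ))
      (Finset.univ.filter fun x : Fin k => (h x : ℕ) = (f i : ℕ) ∧ (x:ℕ) < (g i : ℕ)) := by
    rw [Finset.disjoint_left]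
    intro x h1 h2
    rw [Finset.mem_filter] at h1 h2
    omega
  have hsplit1 : (Finset.univ.filter fun x : Fin k => (x:ℕ) < (g i : ℕ))
      = (Finset.univ.filter fun x : Fin k => (h x : ℕ) < (f i : ℕ))
        ∪ (Finset.univ.filter fun x : Fin k => (h x : ℕ) = (f i : ℕ) ∧ (x:ℕ) < (g i : ℕ)) := by
    ext x
    simp only [Finset.mem_union, Finset.mem_filter, Finset.mem_univ, true_and]
    constructor
    · intro hx
      have hle : h x ≤ f i := by
        rw [← hcomp i]
        exact hh (le_of_lt (Fin.lt_def.mpr hx))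
      rcases lt_or_eq_of_le hle with hlt | heq
      · left; exact_mod_cast hlt
      · right; exact ⟨by rw [heq], hx⟩
    · rintro (hx | hx)
      · by_contra hcon
        have : f i ≤ h x := by
          rw [← hcomp i]
          exact hh (Fin.le_def.mpr (by omega))
        omega
      · exact hx.2
  have hcard1 : (g i : ℕ) = u f (f i : ℕ)
      + (Finset.univ.filter fun x : Fin k => (h x : ℕ) = (f i : ℕ) ∧ (x:ℕ) < (g i : ℕ)).card := by
    rw [← Nv, ← Finset.card_union_of_disjoint hdisj1, ← hsplit1,
      card_val_lt k (g i : ℕ) (le_of_lt (g i).isLt)]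
  -- fiber F
  set F := (Finset.univ.filter fun x : Fin k => (h x : ℕ) = (f i : ℕ)) with hF
  have hdisj2 : Disjoint (Finset.univ.filter fun x : Fin k => (h x : ℕ) < (f i : ℕ)) F := by
    rw [Finset.disjoint_left]
    intro x h1 h2
    rw [Finset.mem_filter] at h1 h2
    omega
  have hsplit2 : (Finset.univ.filter fun x : Fin k => (h x : ℕ) < (f i : ℕ) + 1)
      = (Finset.univ.filter fun x : Fin k => (h x : ℕ) < (f i : ℕ)) ∪ F := by
    ext x
    simp only [hF, Finset.mem_union, Finset.mem_filter, Finset.mem_univ, true_and]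
    omega
  have hcardF : u f ((f i : ℕ) + 1) = u f (f i : ℕ) + F.card := by
    rw [← Nv, ← Nv1, hsplit2, Finset.card_union_of_disjoint hdisj2]
  -- G
  set G := (Finset.univ.filter fun j : Fin m => f j = f i).image g with hG
  have hGsub : G ⊆ F := by
    intro x hx
    obtain ⟨j, hj, rfl⟩ := Finset.mem_image.mp hx
    rw [Finset.mem_filter] at hj
    rw [hF, Finset.mem_filter]
    exact ⟨Finset.mem_univ _, by rw [hcomp j, hj.2]⟩
  have hcardG : G.card = (Finset.univ.filter fun j : Fin m => f j = f i).card :=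
    Finset.card_image_of_injective _ hg
  -- D same
  have hDsame : D f ((f i : ℕ) + 1) = D f (f i : ℕ) := by
    unfold D
    congr 1
    ext w
    simp only [Finset.mem_filter, Finset.mem_univ, true_and]
    constructor
    · rintro ⟨hw1, hw2⟩
      refine ⟨?_, hw2⟩
      rcases Nat.lt_or_ge (w:ℕ) (f i : ℕ) with hlt | hge
      · exact hlt
      · exfalso
        have : w = f i := Fin.ext (by omega)
        exact hw2 (this ▸ Finset.mem_image_of_mem f (Finset.mem_univ i))
    · rintro ⟨hw1, hw2⟩
      exact ⟨by omega, hw2⟩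
  -- A split
  have hAsplit : A f ((f i : ℕ) + 1)
      = A f (f i : ℕ) + (Finset.univ.filter fun j : Fin m => f j = f i).card := by
    unfold A
    rw [← Finset.card_union_of_disjoint (by
      rw [Finset.disjoint_left]
      intro j h1 h2
      rw [Finset.mem_filter] at h1 h2
      rw [h2.2] at h1
      omega)]
    congr 1
    ext j
    simp only [Finset.mem_union, Finset.mem_filter, Finset.mem_univ, true_and]
    constructor
    · intro hj
      rcases Nat.lt_or_ge (f j : ℕ) (f i : ℕ) with hlt | hge
      · left; exact hlt
      · right; exact Fin.ext (by omega)
    · rintro (hj | hj)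
      · omega
      · rw [hj]; omega
  -- F = G
  have hFG : F = G := by
    apply (Finset.eq_of_subset_of_card_le hGsub ?_).symm
    rw [hcardG]
    have : F.card = (Finset.univ.filter fun j : Fin m => f j = f i).card := by
      have hu1 : u f ((f i : ℕ) + 1) = A f ((f i : ℕ) + 1) + D f ((f i : ℕ) + 1) := rfl
      have hu0 : u f (f i : ℕ) = A f (f i : ℕ) + D f (f i : ℕ) := rfl
      omega
    omega
  -- T set
  have hTset : (Finset.univ.filter fun x : Fin k => (h x : ℕ) = (f i : ℕ) ∧ (x:ℕ) < (g i : ℕ))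
      = (Finset.univ.filter fun j : Fin m => f j = f i ∧ (j:ℕ) < (i:ℕ)).image g := by
    ext x
    simp only [Finset.mem_filter, Finset.mem_univ, true_and, Finset.mem_image]
    constructor
    · rintro ⟨hx1, hx2⟩
      have hxF : x ∈ F := by rw [hF, Finset.mem_filter]; exact ⟨Finset.mem_univ _, hx1⟩
      rw [hFG, hG] at hxF
      obtain ⟨j, hj, rfl⟩ := Finset.mem_image.mp hxF
      rw [Finset.mem_filter] at hj
      refine ⟨j, ⟨hj.2, ?_⟩, rfl⟩
      have : g j < g i := Fin.lt_def.mpr hx2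
      exact_mod_cast hgs.lt_iff_lt.mp this
    · rintro ⟨j, ⟨hj1, hj2⟩, rfl⟩
      constructor
      · rw [hcomp j, hj1]
      · exact_mod_cast hgs (show j < i from Fin.lt_def.mpr hj2)
  have hTcard : (Finset.univ.filter fun x : Fin k => (h x : ℕ) = (f i : ℕ) ∧ (x:ℕ) < (g i : ℕ)).card
      = (Finset.univ.filter fun j : Fin m => f j = f i ∧ (j:ℕ) < (i:ℕ)).card := by
    rw [hTset, Finset.card_image_of_injective _ hg]
  -- i split
  have hisplit : A f (f i : ℕ)
      + (Finset.univ.filter fun j : Fin m => f j = f i ∧ (j:ℕ) < (i:ℕ)).card = (i : ℕ) := by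
    unfold A
    rw [← Finset.card_union_of_disjoint (by
      rw [Finset.disjoint_left]
      intro j h1 h2
      rw [Finset.mem_filter] at h1 h2
      rw [h2.2.1] at h1
      omega)]
    rw [show ((Finset.univ.filter fun j : Fin m => (f j : ℕ) < (f i : ℕ))
        ∪ (Finset.univ.filter fun j : Fin m => f j = f i ∧ (j:ℕ) < (i:ℕ)))
        = (Finset.univ.filter fun j : Fin m => (j:ℕ) < (i:ℕ)) from ?_]
    · exact card_val_lt m (i:ℕ) (le_of_lt i.isLt)
    · ext j
      simp only [Finset.mem_union, Finset.mem_filter, Finset.mem_univ, true_and]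
      constructor
      · rintro (hj | hj)
        · by_contra hcon
          have : f i ≤ f j := hf (Fin.le_def.mpr (by omega))
          omega
        · exact hj.2
      · intro hj
        have hle : f j ≤ f i := hf (le_of_lt (Fin.lt_def.mpr hj))
        rcases lt_or_eq_of_le hle with hlt | heq
        · left; exact_mod_cast hlt
        · right; exact ⟨heq, hj⟩
  have hu0 : u f (f i : ℕ) = A f (f i : ℕ) + D f (f i : ℕ) := rfl
  omega

end Uniq

end ISD

/-- The injection-surjection decomposition of order-preserving functions between
finite ordinals: every monotone `f : Fin m → Fin n` factors uniquely as a monotone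
injection into `Fin (m + n - |image f|)` followed by a monotone surjection. -/
theorem injection_surjection_decomposition (m n : ℕ) (f : Fin m → Fin n) (hf : Monotone f) :
    ∃! p : (Fin m → Fin (m + n - (Finset.univ.image f).card)) ×
           (Fin (m + n - (Finset.univ.image f).card) → Fin n),
      Monotone p.1 ∧ Function.Injective p.1 ∧
      Monotone p.2 ∧ Function.Surjective p.2 ∧ f = p.2 ∘ p.1 := by
  classical
  refine ⟨⟨ISD.gmap f, ISD.hmap f⟩,
    ⟨(ISD.gmap_strictmono f hf).monotone, (ISD.gmap_strictmono f hf).injective,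
      ISD.hmap_mono f, ISD.hmap_surj f, funext fun i => (ISD.hmap_gmap f hf i).symm⟩, ?_⟩
  rintro ⟨g, h⟩ ⟨hgm, hgi, hhm, hhs, hcomp⟩
  have hcomp' : ∀ i, h (g i) = f i := fun i => (congrFun hcomp i).symm
  have hgeq : g = ISD.gmap f := by
    funext i
    apply Fin.ext
    rw [ISD.g_determined f g h rfl hgi hhs hcomp' hf hgm hhm i]
    rfl
  have hheq : h = ISD.hmap f := by
    funext x
    apply Fin.ext
    rw [ISD.h_determined f g h rfl hgi hhs hcomp' hhm x]
    rfl
  rw [hgeq, hheq]
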